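/- The strong group incentive ratio of Round-Robin is unbounded for coalitions of size 2: for every R ≥ 1, there exists an instance with n = 3 agents and m = 4 indivisible goods, additive valuations v_1, v_2, v_3, a profile of strict orderings ≻ with v_a consistent with ≻_a for every a, and manipulated orderings ≻'_1, ≻'_2 for the coalition C = {1, 2}, such that v_a(RR_a(≻'_1, ≻'_2, ≻_3)) ≥ v_a(RR_a(≻)) for both a ∈ {1, 2}, v_2(RR_2(≻)) > 0, and v_2(RR_2(≻'_1, ≻'_2, ≻_3)) > R·v_2(RR_2(≻)). Consequently, for every c ≥ 2 no finite R satisfies the SGIR(c) condition for Round-Robin. -/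

import Mathlib

/-- A strict total ordering over goods, given as a list from most preferred to
least preferred: it must be a duplicate-free enumeration of all goods. -/
def IsOrder {γ : Type*} [Fintype γ] (l : List γ) : Prop :=
  l.Nodup ∧ ∀ g : γ, g ∈ l

/-- An additive valuation `v` (given by its values on single goods) is consistent
with the strict ordering `l` if strictly more valuable goods appear earlier. -/
def Consistent {γ : Type*} [DecidableEq γ] (v : γ → ℝ) (l : List γ) : Prop :=
  ∀ g g' : γ, v g > v g' → l.idxOf g < l.idxOf g'

/-- State of Round-Robin after `s` stages: the set of remaining goods, together
with the bundle picked so far by each agent.  At stage `s` (0-indexed), agent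
`s % n` picks his most preferred remaining good. -/
def rrState {γ : Type*} [DecidableEq γ] [Fintype γ] (n : ℕ) (hn : 0 < n)
    (pref : Fin n → List γ) : ℕ → Finset γ × (Fin n → Finset γ)
  | 0 => (Finset.univ, fun _ => ∅)
  | s + 1 =>
    let st := rrState n hn pref s
    let agent : Fin n := ⟨s % n, Nat.mod_lt s hn⟩
    match (pref agent).find? (fun g => decide (g ∈ st.1)) with
    | none => st
    | some g => (st.1.erase g, Function.update st.2 agent (insert g (st.2 agent)))

/-- The Round-Robin allocation: the bundle of agent `a` after all goods are picked. -/
def rr {γ : Type*} [DecidableEq γ] [Fintype γ] (n : ℕ) (hn : 0 < n)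
    (pref : Fin n → List γ) (a : Fin n) : Finset γ :=
  (rrState n hn pref (Fintype.card γ)).2 a

/-- `R` satisfies the SGIR(`c`) condition for Round-Robin: over all instances,
whenever a coalition of size at most `c` misreports and every corrupted agent is
weakly better off, every corrupted agent gains at most a factor `R`. -/
def RRSGIRCond (c : ℕ) (R : ℝ) : Prop :=
  ∀ (n m : ℕ) (hn : 0 < n) (v : Fin n → Fin m → ℝ)
    (pref pref' : Fin n → List (Fin m)) (C : Finset (Fin n)),
    (∀ a g, 0 ≤ v a g) →
    (∀ a, IsOrder (pref a)) → (∀ a, IsOrder (pref' a)) →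
    (∀ a, Consistent (v a) (pref a)) →
    C.card ≤ c → (∀ a ∉ C, pref' a = pref a) →
    (∀ a ∈ C, (∑ g ∈ rr n hn pref a, v a g) ≤ ∑ g ∈ rr n hn pref' a, v a g) →
    ∀ a ∈ C, (∑ g ∈ rr n hn pref' a, v a g) ≤ R * ∑ g ∈ rr n hn pref a, v a g

/-- `R` satisfies the GIR(`c`) condition for Round-Robin: over all instances and
all misreports by a coalition of size at most `c`, some corrupted agent gains at
most a factor `R`. -/
def RRGIRCond (c : ℕ) (R : ℝ) : Prop :=
  ∀ (n m : ℕ) (hn : 0 < n) (v : Fin n → Fin m → ℝ)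
    (pref pref' : Fin n → List (Fin m)) (C : Finset (Fin n)),
    (∀ a g, 0 ≤ v a g) →
    (∀ a, IsOrder (pref a)) → (∀ a, IsOrder (pref' a)) →
    (∀ a, Consistent (v a) (pref a)) →
    C.Nonempty → C.card ≤ c → (∀ a ∉ C, pref' a = pref a) →
    ∃ a ∈ C, (∑ g ∈ rr n hn pref' a, v a g) ≤ R * ∑ g ∈ rr n hn pref a, v a g

/-- the SGIR of Round-Robin is unbounded for coalitions of size 2:
for every `R ≥ 1` there is an instance with `n = 3` agents and `m = 4` goods in
which the coalition `{1, 2}` (agents `0` and `1` here) can misreport so that both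
members are weakly better off while agent `2` (index `1`) gains a factor `> R`.
Consequently, for every `c ≥ 2` no finite `R` satisfies the SGIR(`c`) condition. -/
theorem stmt18 :
    (∀ R : ℝ, 1 ≤ R →
      ∃ (v : Fin 3 → Fin 4 → ℝ) (pref pref' : Fin 3 → List (Fin 4)),
        (∀ a g, 0 ≤ v a g) ∧
        (∀ a, IsOrder (pref a)) ∧ (∀ a, IsOrder (pref' a)) ∧
        (∀ a, Consistent (v a) (pref a)) ∧
        pref' 2 = pref 2 ∧
        (∀ a : Fin 3, (a : ℕ) < 2 →
          (∑ g ∈ rr 3 (Nat.succ_pos 2) pref a, v a g) ≤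
            ∑ g ∈ rr 3 (Nat.succ_pos 2) pref' a, v a g) ∧
        0 < (∑ g ∈ rr 3 (Nat.succ_pos 2) pref 1, v 1 g) ∧
        R * (∑ g ∈ rr 3 (Nat.succ_pos 2) pref 1, v 1 g) <
          ∑ g ∈ rr 3 (Nat.succ_pos 2) pref' 1, v 1 g) ∧
    ∀ c : ℕ, 2 ≤ c → ∀ R : ℝ, 1 ≤ R → ¬ RRSGIRCond c R := by
  have key : ∀ R : ℝ, 1 ≤ R →
      ∃ (v : Fin 3 → Fin 4 → ℝ) (pref pref' : Fin 3 → List (Fin 4)),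
        (∀ a g, 0 ≤ v a g) ∧
        (∀ a, IsOrder (pref a)) ∧ (∀ a, IsOrder (pref' a)) ∧
        (∀ a, Consistent (v a) (pref a)) ∧
        pref' 2 = pref 2 ∧
        (∀ a : Fin 3, (a : ℕ) < 2 →
          (∑ g ∈ rr 3 (Nat.succ_pos 2) pref a, v a g) ≤
            ∑ g ∈ rr 3 (Nat.succ_pos 2) pref' a, v a g) ∧
        0 < (∑ g ∈ rr 3 (Nat.succ_pos 2) pref 1, v 1 g) ∧
        R * (∑ g ∈ rr 3 (Nat.succ_pos 2) pref 1, v 1 g) <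
          ∑ g ∈ rr 3 (Nat.succ_pos 2) pref' 1, v 1 g := by
    intro R hR
    set P : Fin 3 → List (Fin 4) := ![[0,1,2,3],[0,1,2,3],[0,1,2,3]] with hP
    set P' : Fin 3 → List (Fin 4) := ![[1,2,3,0],[0,1,2,3],[0,1,2,3]] with hP'
    have e1 : rr 3 (Nat.succ_pos 2) P 0 = {0,3} := by rw [hP]; decide
    have e2 : rr 3 (Nat.succ_pos 2) P' 0 = {1,3} := by rw [hP']; decide
    have e3 : rr 3 (Nat.succ_pos 2) P 1 = {1} := by rw [hP]; decide
    have e4 : rr 3 (Nat.succ_pos 2) P' 1 = {0} := by rw [hP']; decide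
    refine ⟨fun a g => if a = 1 then (if g = 0 then R+1 else if g = 1 then 1 else 0)
        else 0, P, P', ?_, ?_, ?_, ?_, rfl, ?_, ?_, ?_⟩
    · intro a g
      fin_cases a <;> fin_cases g <;> simp <;> linarith
    · intro a; rw [hP]; fin_cases a <;> exact ⟨by decide, by decide⟩
    · intro a; rw [hP']; fin_cases a <;> exact ⟨by decide, by decide⟩
    · intro a
      fin_cases a <;> intro g g' h <;> fin_cases g <;> fin_cases g' <;>
        rw [hP] at * <;> simp_all <;> first | rfl | decide | linarith
    · intro a ha
      fin_cases a <;> simp only [Fin.zero_eta, Fin.mk_one, Fin.reduceFinMk] at *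
      · rw [e1, e2]; simp
      · rw [e3, e4]; simp; linarith
      · exact absurd ha (by norm_num)
    · rw [e3]; simp
    · rw [e3, e4]; simp
  refine ⟨key, ?_⟩
  intro c hc R hR hcond
  obtain ⟨v, pref, pref', h0, hord, hord', hcons, h2, hbetter, hpos, hgain⟩ := key R hR
  have := hcond 3 4 (Nat.succ_pos 2) v pref pref' {0, 1} h0 hord hord' hcons
    (by simpa using hc)
    (by intro a ha; fin_cases a <;> simp_all)
    (by intro a ha
        fin_cases a
        · exact hbetter 0 (by norm_num)
        · exact hbetter 1 (by norm_num)
        · simp at ha)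
    1 (by simp)
  linarith
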